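/- Let N and T be integers with 2 ≤ T < N/2. For any sequence of integers 0 ≤ n₁ < n₂ < … < n_T ≤ N, there exists an integer r ≤ 2N/T such that n_{i+1} − n_i = r for at least T(T−1)/(4N) values of i ∈ {1, …, T−1}. -/
import Mathlib


open NumberField Polynomial Filter
open scoped IntermediateField TensorProduct Classical

/-- Let `2 ≤ T < N/2`.  For any strictly increasing sequence
`0 ≤ n₀ < n₁ < ⋯ < n_{T-1} ≤ N` of integers there exists `r ≤ 2N/T` such that
`n_{i+1} − n_i = r` for at least `T(T−1)/(4N)` values of `i`. -/
theorem exists_common_gap (N T : ℕ) (hT : 2 ≤ T) (hTN : 2 * T < N)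
    (n : ℕ → ℕ) (hmono : ∀ i j, i < j → j < T → n i < n j)
    (hbound : ∀ i, i < T → n i ≤ N) :
    ∃ r : ℕ, (r : ℝ) ≤ 2 * N / T ∧
      (T : ℝ) * ((T : ℝ) - 1) / (4 * N) ≤
        (((Finset.range (T - 1)).filter fun i => n (i + 1) - n i = r).card : ℝ) := by
  classical
  set K := 2 * N / T with hK
  have hTpos : 0 < T := by omega
  have hKpos : 0 < K := by
    have : 1 * T ≤ 2 * N := by omega
    have := (Nat.le_div_iff_mul_le hTpos).mpr this
    omega
  set d : ℕ → ℕ := fun i => n (i + 1) - n i with hd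
  set M := Finset.range (T - 1) with hM
  have hd1 : ∀ i ∈ M, 1 ≤ d i := by
    intro i hi
    rw [hM, Finset.mem_range] at hi
    have := hmono i (i + 1) (by omega) (by omega)
    simp only [hd]
    omega
  -- telescoping sum of gaps is at most N
  have hsum : ∑ i ∈ M, d i ≤ N := by
    have key : ∀ m, m ≤ T - 1 → ∑ i ∈ Finset.range m, d i = n m - n 0 := by
      intro m hm
      induction m with
      | zero => simp
      | succ k ih =>
        rw [Finset.sum_range_succ, ih (by omega)]
        have h1 : n k < n (k + 1) := hmono k (k + 1) (by omega) (by omega)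
        have h0 : n 0 ≤ n k := by
          rcases Nat.eq_zero_or_pos k with h | h
          · simp [h]
          · exact le_of_lt (hmono 0 k h (by omega))
        simp only [hd]
        omega
    have h1 := key (T - 1) le_rfl
    have h2 := hbound (T - 1) (by omega)
    rw [hM, h1]
    omega
  set S := M.filter (fun i => d i ≤ K) with hS
  set B := M.filter (fun i => ¬ d i ≤ K) with hB
  have hcards : S.card + B.card = T - 1 := by
    rw [hS, hB, Finset.card_filter_add_card_filter_not, hM, Finset.card_range]
  have hBsum : B.card * (K + 1) ≤ N := by
    have h1 : B.card • (K + 1) ≤ ∑ i ∈ B, d i := by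
      apply Finset.card_nsmul_le_sum
      intro i hi
      rw [hB, Finset.mem_filter] at hi
      omega
    have h2 : ∑ i ∈ B, d i ≤ ∑ i ∈ M, d i :=
      Finset.sum_le_sum_of_subset (Finset.filter_subset _ _)
    simp only [smul_eq_mul] at h1
    omega
  have h2N : 2 * N < T * (K + 1) := by
    have h1 : T * (2 * N / T) + 2 * N % T = 2 * N := Nat.div_add_mod (2 * N) T
    have h2 : 2 * N % T < T := Nat.mod_lt _ hTpos
    calc 2 * N = T * K + 2 * N % T := h1.symm
      _ < T * K + T := Nat.add_lt_add_left h2 _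
      _ = T * (K + 1) := by ring
  have hBlt : 2 * B.card < T := by
    by_contra h
    push_neg at h
    have h1 : T * (K + 1) ≤ 2 * B.card * (K + 1) := Nat.mul_le_mul_right _ h
    have h2 : 2 * B.card * (K + 1) = 2 * (B.card * (K + 1)) := by ring
    omega
  have hScard : T - 1 ≤ 2 * S.card := by omega
  -- pigeonhole over values in Icc 1 K
  have hmaps : ∀ i ∈ S, d i ∈ Finset.Icc 1 K := by
    intro i hi
    rw [hS, Finset.mem_filter] at hi
    rw [Finset.mem_Icc]
    exact ⟨hd1 i hi.1, hi.2⟩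
  obtain ⟨r, hrmem, hrmax⟩ := Finset.exists_max_image (Finset.Icc 1 K)
    (fun r => (S.filter (fun i => d i = r)).card) ⟨1, Finset.mem_Icc.mpr ⟨le_rfl, hKpos⟩⟩
  have hSle : S.card ≤ K * (S.filter (fun i => d i = r)).card := by
    rw [Finset.card_eq_sum_card_fiberwise hmaps]
    calc ∑ r' ∈ Finset.Icc 1 K, (S.filter fun i => d i = r').card
        ≤ ∑ _r' ∈ Finset.Icc 1 K, (S.filter fun i => d i = r).card :=
          Finset.sum_le_sum (fun r' hr' => hrmax r' hr')
      _ = K * (S.filter fun i => d i = r).card := by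
          rw [Finset.sum_const, Nat.card_Icc, smul_eq_mul]
          have hKK : K + 1 - 1 = K := by omega
          rw [hKK]
  have hsub : (S.filter fun i => d i = r).card ≤
      ((Finset.range (T - 1)).filter fun i => n (i + 1) - n i = r).card := by
    apply Finset.card_le_card
    intro i hi
    rw [Finset.mem_filter] at hi
    rw [hS, Finset.mem_filter] at hi
    rw [Finset.mem_filter]
    refine ⟨hi.1.1, ?_⟩
    have := hi.2
    simp only [hd] at this
    exact this
  refine ⟨r, ?_, ?_⟩
  · rw [Finset.mem_Icc] at hrmem
    have h1 : (r : ℝ) ≤ (K : ℝ) := Nat.cast_le.mpr hrmem.2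
    have h2 : (K : ℝ) ≤ 2 * N / T := by
      rw [hK]
      have := Nat.cast_div_le (m := 2 * N) (n := T) (α := ℝ)
      push_cast at this
      exact this
    linarith
  · have hNpos : (0 : ℝ) < N := by exact_mod_cast (by omega : 0 < N)
    have hTR : (0 : ℝ) < T := by exact_mod_cast hTpos
    have hS2 : (T : ℝ) - 1 ≤ 2 * (S.card : ℝ) := by
      have h := Nat.cast_le (α := ℝ).mpr hScard
      rw [Nat.cast_sub (by omega : 1 ≤ T)] at h
      push_cast at h
      linarith
    set F : ℝ := ((S.filter fun i => d i = r).card : ℝ) with hF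
    have hFnn : (0 : ℝ) ≤ F := by positivity
    have hSK : (S.card : ℝ) ≤ (K : ℝ) * F := by rw [hF]; exact_mod_cast hSle
    have hKT : (K : ℝ) * T ≤ 2 * N := by
      have := Nat.div_mul_le_self (2 * N) T
      have h := Nat.cast_le (α := ℝ).mpr this
      push_cast at h
      exact h
    set G : ℝ := (((Finset.range (T - 1)).filter fun i => n (i + 1) - n i = r).card : ℝ) with hG
    have hFG : F ≤ G := Nat.cast_le.mpr hsub
    rw [div_le_iff₀ (by positivity)]
    calc (T : ℝ) * ((T : ℝ) - 1) ≤ (T : ℝ) * (2 * (S.card : ℝ)) :=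
          mul_le_mul_of_nonneg_left hS2 hTR.le
      _ ≤ (T : ℝ) * (2 * ((K : ℝ) * F)) := by nlinarith
      _ = 2 * (((K : ℝ) * T) * F) := by ring
      _ ≤ 2 * ((2 * N) * F) := by nlinarith
      _ = 4 * N * F := by ring
      _ ≤ 4 * N * G := by nlinarith
      _ = G * (4 * N) := by ring
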